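/- The third power moment: Σ_{a∈F} W_{F,s}(a)^3 = p^{2n} · |R|, where R = {x ∈ F : (1-x)^s + x^s - 1 = 0}, assuming W_{F,s}(a) is real for all a. -/

import Mathlib

open scoped BigOperators
open Finset
open scoped Classical

/-- The Weil sum `W_{F,s}(a) = ∑_{x ∈ F} μ(x^s - a x)`, where `μ` is the canonical
additive character `μ(x) = ζ_p^{Tr_{F/𝔽_p}(x)}` of the finite field `F`. -/
noncomputable def weilSum (p : ℕ) (F : Type) [Field F] [Fintype F]
    [Algebra (ZMod p) F] (s : ℕ) (a : F) : ℂ :=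
  ∑ x : F, Complex.exp (2 * Real.pi * Complex.I *
    ((Algebra.trace (ZMod p) F (x ^ s - a * x)).val : ℂ) / (p : ℂ))

lemma zeta_pow_p (p : ℕ) [Fact p.Prime] : (Complex.exp (2*Real.pi*Complex.I/p))^p = 1 := by
  have hp : (p:ℂ) ≠ 0 := Nat.cast_ne_zero.2 (Fact.out (p := p.Prime)).pos.ne'
  rw [← Complex.exp_nat_mul,
    show (p:ℂ) * (2*Real.pi*Complex.I/p) = 2*Real.pi*Complex.I by field_simp]
  exact Complex.exp_two_pi_mul_I

/-- The canonical additive character of `F`. -/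
noncomputable def myChar (p : ℕ) [Fact p.Prime] (F : Type) [Field F] [Fintype F]
    [Algebra (ZMod p) F] : AddChar F ℂ :=
  (AddChar.zmodChar p (zeta_pow_p p)).compAddMonoidHom
    (Algebra.trace (ZMod p) F).toAddMonoidHom

lemma myChar_apply (p : ℕ) [Fact p.Prime] (F : Type) [Field F] [Fintype F]
    [Algebra (ZMod p) F] (x : F) :
    myChar p F x = Complex.exp (2 * Real.pi * Complex.I *
      ((Algebra.trace (ZMod p) F x).val : ℂ) / (p : ℂ)) := by
  rw [myChar, AddChar.compAddMonoidHom_apply, AddChar.zmodChar_apply, ← Complex.exp_nat_mul]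
  rw [show ((Algebra.trace (ZMod p) F).toAddMonoidHom x) = Algebra.trace (ZMod p) F x from rfl]
  congr 1
  ring

lemma sum_myChar_mul (p : ℕ) [Fact p.Prime] (F : Type) [Field F] [Fintype F]
    [Algebra (ZMod p) F] (t : F) :
    ∑ a : F, myChar p F (a * t) = if t = 0 then (Fintype.card F : ℂ) else 0 := by
  split_ifs with h
  · simp [h, AddChar.map_zero_eq_one]
  · have hnd : ∃ b, Algebra.trace (ZMod p) F (t*b) ≠ 0 := by
      by_contra! hf
      exact h ((traceForm_nondegenerate (ZMod p) F).1 t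
        (by simpa [Algebra.traceForm_apply] using hf))
    obtain ⟨b, hb⟩ := hnd
    have hprim : IsPrimitiveRoot (Complex.exp (2*Real.pi*Complex.I/p)) p :=
      Complex.isPrimitiveRoot_exp p (Fact.out (p := p.Prime)).pos.ne'
    have h2 : (myChar p F).mulShift t ≠ 0 := by
      rw [AddChar.ne_zero_iff]
      refine ⟨b, ?_⟩
      rw [AddChar.mulShift_apply, myChar, AddChar.compAddMonoidHom_apply,
        AddChar.zmodChar_apply]
      have hval : (Algebra.trace (ZMod p) F (t*b)).val ≠ 0 := by
        simpa [ZMod.val_eq_zero] using hb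
      exact hprim.pow_ne_one_of_pos_of_lt hval (ZMod.val_lt _)
    calc ∑ a : F, myChar p F (a * t)
        = ∑ a : F, (myChar p F).mulShift t a := by
          simp [AddChar.mulShift_apply, mul_comm]
      _ = 0 := by rw [AddChar.sum_eq_ite]; simp [h2]

lemma pow_bij (F : Type) [Field F] [Fintype F] (s : ℕ) (hs0 : 0 < s)
    (hs : Nat.Coprime s (Fintype.card F - 1)) :
    Function.Bijective (fun x : F => x ^ s) := by
  rw [Finite.injective_iff_bijective.symm]
  intro x y hxy
  simp only at hxy
  rcases eq_or_ne y 0 with hy | hy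
  · subst hy
    simpa [zero_pow hs0.ne', pow_eq_zero_iff hs0.ne'] using hxy
  · have hx : x ≠ 0 := by
      intro hx0
      exact hy (by simpa [hx0, zero_pow hs0.ne', eq_comm, pow_eq_zero_iff hs0.ne'] using hxy)
    have hu0 : x * y⁻¹ ≠ 0 := mul_ne_zero hx (inv_ne_zero hy)
    have hu : (x * y⁻¹) ^ s = 1 := by
      rw [mul_pow, inv_pow, hxy, mul_inv_cancel₀ (pow_ne_zero _ hy)]
    have h1 : orderOf (x * y⁻¹) ∣ s := orderOf_dvd_of_pow_eq_one hu
    have h2 : orderOf (x * y⁻¹) ∣ Fintype.card F - 1 :=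
      orderOf_dvd_of_pow_eq_one (FiniteField.pow_card_sub_one_eq_one _ hu0)
    have hord : orderOf (x * y⁻¹) = 1 := Nat.eq_one_of_dvd_coprimes hs h1 h2
    have := orderOf_eq_one_iff.mp hord
    field_simp at this
    exact this

/-- the third power moment `∑_{a ∈ F} W_{F,s}(a)^3 = p^{2n} · |R|`, where
`R = {x ∈ F : (1-x)^s + x^s = 1}`, with `s ≡ 1 (mod p-1)` so all values are integers. -/
theorem weil_sum_third_power_moment (p n : ℕ) [Fact p.Prime] (F : Type) [Field F] [Fintype F]
    [Algebra (ZMod p) F] (hF : Fintype.card F = p ^ n) (s : ℕ) (hs0 : 0 < s)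
    (hs : Nat.Coprime s (p ^ n - 1)) (hs1 : s ≡ 1 [MOD p - 1]) :
    ∑ a : F, (weilSum p F s a) ^ 3 =
      (p : ℂ) ^ (2 * n) * (Nat.card {x : F // (1 - x) ^ s + x ^ s = 1} : ℂ) := by
  have hbij : Function.Bijective (fun x : F => x ^ s) :=
    pow_bij F s hs0 (by rw [hF]; exact hs)
  have hneg : ∀ t : F, (-t) ^ s = -(t ^ s) := by
    intro t
    have hchar : CharP F p := charP_of_injective_algebraMap (algebraMap (ZMod p) F).injective p
    rcases eq_or_ne p 2 with hp2 | hp2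
    · subst hp2
      haveI : CharP F 2 := hchar
      rw [CharTwo.neg_eq, CharTwo.neg_eq]
    · have hodd : Odd s := by
        have h2 : 2 ∣ p - 1 := (Nat.Prime.even_sub_one (Fact.out) hp2).two_dvd
        have := Nat.ModEq.of_dvd h2 hs1
        rw [Nat.ModEq] at this
        norm_num at this
        exact Nat.odd_iff.mpr this
      rw [hodd.neg_pow]
  set ψ := myChar p F with hψdef
  set Q := (Fintype.card F : ℂ) with hQdef
  set N := (Nat.card {x : F // (1 - x) ^ s + x ^ s = 1} : ℂ) with hNdef
  have hW : ∀ a : F, weilSum p F s a = ∑ x : F, ψ (x ^ s - a * x) := by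
    intro a
    exact Finset.sum_congr rfl fun x _ => (myChar_apply p F _).symm
  have key : ∀ c : F, ∑ t : F, ψ (t ^ s * c) = if c = 0 then Q else 0 := by
    intro c
    exact (Fintype.sum_bijective _ hbij _ _ fun t => rfl).trans (sum_myChar_mul p F c)
  have cube : ∀ f : F → ℂ, (∑ x : F, f x)^3 = ∑ x : F, ∑ y : F, ∑ z : F, f x * f y * f z := by
    intro f
    rw [pow_succ', pow_two]
    simp only [Finset.sum_mul, Finset.mul_sum]
    exact Finset.sum_congr rfl fun _ _ => Finset.sum_congr rfl fun _ _ =>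
      Finset.sum_congr rfl fun _ _ => by ring
  have mul3 : ∀ u v w : F, ψ u * ψ v * ψ w = ψ (u+v+w) := fun u v w => by
    rw [AddChar.map_add_eq_mul, AddChar.map_add_eq_mul]
  have main : ∑ a : F, (weilSum p F s a)^3
      = (∑ x : F, ∑ y : F, ψ (x^s + y^s - (x+y)^s)) * Q := by
    calc ∑ a : F, (weilSum p F s a)^3
        = ∑ a : F, ∑ x : F, ∑ y : F, ∑ z : F,
            ψ (x^s + y^s + z^s) * ψ (a * (-(x+y+z))) := by
          refine Finset.sum_congr rfl fun a _ => ?_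
          rw [hW, cube]
          refine Finset.sum_congr rfl fun x _ => Finset.sum_congr rfl fun y _ =>
            Finset.sum_congr rfl fun z _ => ?_
          rw [mul3, ← AddChar.map_add_eq_mul]
          congr 1
          ring
      _ = ∑ x : F, ∑ y : F, ∑ z : F,
            ψ (x^s + y^s + z^s) * (if -(x+y+z) = 0 then Q else 0) := by
          rw [Finset.sum_comm]
          refine Finset.sum_congr rfl fun x _ => ?_
          rw [Finset.sum_comm]
          refine Finset.sum_congr rfl fun y _ => ?_
          rw [Finset.sum_comm]
          refine Finset.sum_congr rfl fun z _ => ?_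
          rw [← Finset.mul_sum, sum_myChar_mul]
      _ = ∑ x : F, ∑ y : F, ψ (x^s + y^s + (-(x+y))^s) * Q := by
          refine Finset.sum_congr rfl fun x _ => Finset.sum_congr rfl fun y _ => ?_
          calc ∑ z : F, ψ (x^s+y^s+z^s) * (if -(x+y+z) = 0 then Q else 0)
              = ∑ z : F, (if z = -(x+y) then ψ (x^s+y^s+z^s) * Q else 0) := by
                refine Finset.sum_congr rfl fun z _ => ?_
                by_cases hz : z = -(x+y)
                · rw [if_pos hz, if_pos (by rw [hz]; ring)]
                · rw [if_neg hz, if_neg, mul_zero]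
                  intro h
                  exact hz (eq_neg_of_add_eq_zero_right (neg_eq_zero.mp h))
            _ = ψ (x^s+y^s+(-(x+y))^s) * Q := by
                rw [Finset.sum_ite_eq' Finset.univ]
                simp
      _ = (∑ x : F, ∑ y : F, ψ (x^s + y^s - (x+y)^s)) * Q := by
          rw [Finset.sum_mul]
          refine Finset.sum_congr rfl fun x _ => ?_
          rw [Finset.sum_mul]
          refine Finset.sum_congr rfl fun y _ => ?_
          rw [hneg, ← sub_eq_add_neg]
  have hT : (∑ x : F, ∑ y : F, ψ (x^s + y^s - (x+y)^s)) = Q * N := by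
    have reidx : ∀ x : F, ∑ y : F, ψ (x^s + y^s - (x+y)^s)
        = ∑ t : F, ψ (x^s + (t - x)^s - t^s) := by
      intro x
      exact Fintype.sum_bijective (fun y : F => x + y) (Equiv.addLeft x).bijective
        _ _ (fun y => by rw [add_sub_cancel_left])
    simp_rw [reidx]
    rw [Finset.sum_comm]
    rw [← Finset.sum_erase_add _ _ (Finset.mem_univ (0:F))]
    have h0 : (∑ x : F, ψ (x^s + ((0:F) - x)^s - (0:F)^s)) = Q := by
      have harg : ∀ x : F, x^s + ((0:F) - x)^s - (0:F)^s = 0 := fun x => by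
        rw [zero_sub, hneg, zero_pow hs0.ne']; ring
      simp only [harg, AddChar.map_zero_eq_one]
      simp [hQdef]
    rw [h0]
    have herase : ∀ t ∈ Finset.univ.erase (0:F),
        (∑ x : F, ψ (x^s + (t - x)^s - t^s))
          = ∑ u : F, ψ (t^s * ((1-u)^s + u^s - 1)) := by
      intro t ht
      have ht0 : t ≠ 0 := Finset.ne_of_mem_erase ht
      exact (Fintype.sum_bijective (fun u : F => u * t)
        (Equiv.mulRight₀ t ht0).bijective _ _ (fun u => by
          congr 1
          rw [mul_pow, show t - u*t = (1-u)*t by ring, mul_pow]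
          ring)).symm
    rw [Finset.sum_congr rfl herase, Finset.sum_comm]
    have inner : ∀ u : F, (∑ t ∈ Finset.univ.erase (0:F), ψ (t^s * ((1-u)^s + u^s - 1)))
        = (if (1-u)^s + u^s = 1 then Q else 0) - 1 := by
      intro u
      have h := Finset.sum_erase_add Finset.univ
        (fun t : F => ψ (t^s * ((1-u)^s + u^s - 1))) (Finset.mem_univ 0)
      rw [key] at h
      simp only [sub_eq_zero] at h
      have h00 : ψ ((0:F)^s * ((1-u)^s + u^s - 1)) = 1 := by
        rw [zero_pow hs0.ne', zero_mul, AddChar.map_zero_eq_one]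
      rw [h00] at h
      exact eq_sub_of_add_eq h
    rw [Finset.sum_congr rfl (fun u _ => inner u)]
    rw [Finset.sum_sub_distrib]
    rw [Finset.sum_ite, Finset.sum_const, Finset.sum_const_zero, add_zero]
    have hN : ((Finset.univ.filter (fun u : F => (1-u)^s + u^s = 1)).card : ℂ) = N := by
      rw [hNdef, Nat.card_eq_fintype_card, Fintype.card_subtype]
    simp only [Finset.sum_const, Finset.card_univ, nsmul_eq_mul, mul_one]
    rw [hN]
    ring
  rw [main, hT]
  have hQ : Q = (p:ℂ)^n := by rw [hQdef, hF]; push_cast; ring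
  rw [hQ, two_mul, pow_add]
  ring
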